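/- Let α, β, γ, α̃, β̃, γ̃ ∈ (0,π) with α + β + γ = π and α̃ + β̃ + γ̃ = π. Set g = sin γ̃/sin γ, P = (sin α̃ · sin β̃)/(sin α · sin β), and Q = (cos α̃ · sin β̃)/(sin α · sin β) − (cos α · sin γ̃)/(sin α · sin γ), and let μ = (g − P + iQ)/(g + P − iQ) ∈ ℂ. Then |μ|² = 1 − 4·(sin α̃ · sin β̃ · sin γ̃)/(sin α · sin β · sin γ) / ((g + P)² + Q²). -/

import Mathlib

open Real

/-- The modulus identity for the Beltrami coefficient
`μ = (g − P + iQ)/(g + P − iQ)` of the linear map between two Euclidean triangles with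
interior angles `α, β, γ` and `α̃, β̃, γ̃`. -/
theorem beltrami_modulus_sq (α β γ αt βt γt : ℝ)
    (hα : α ∈ Set.Ioo 0 π) (hβ : β ∈ Set.Ioo 0 π) (hγ : γ ∈ Set.Ioo 0 π)
    (hαt : αt ∈ Set.Ioo 0 π) (hβt : βt ∈ Set.Ioo 0 π) (hγt : γt ∈ Set.Ioo 0 π)
    (hsum : α + β + γ = π) (hsumt : αt + βt + γt = π)
    (g P Q : ℝ)
    (hg : g = Real.sin γt / Real.sin γ)
    (hP : P = Real.sin αt * Real.sin βt / (Real.sin α * Real.sin β))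
    (hQ : Q = Real.cos αt * Real.sin βt / (Real.sin α * Real.sin β)
        - Real.cos α * Real.sin γt / (Real.sin α * Real.sin γ))
    (μ : ℂ)
    (hμ : μ = ((g : ℂ) - (P : ℂ) + Complex.I * (Q : ℂ)) /
        ((g : ℂ) + (P : ℂ) - Complex.I * (Q : ℂ))) :
    ‖μ‖ ^ 2
      = 1 - 4 * (Real.sin αt * Real.sin βt * Real.sin γt /
            (Real.sin α * Real.sin β * Real.sin γ)) / ((g + P) ^ 2 + Q ^ 2) := by
  have hsα := Real.sin_pos_of_pos_of_lt_pi hα.1 hα.2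
  have hsβ := Real.sin_pos_of_pos_of_lt_pi hβ.1 hβ.2
  have hsγ := Real.sin_pos_of_pos_of_lt_pi hγ.1 hγ.2
  have hsαt := Real.sin_pos_of_pos_of_lt_pi hαt.1 hαt.2
  have hsβt := Real.sin_pos_of_pos_of_lt_pi hβt.1 hβt.2
  have hsγt := Real.sin_pos_of_pos_of_lt_pi hγt.1 hγt.2
  have hg0 : 0 < g := by rw [hg]; positivity
  have hP0 : 0 < P := by rw [hP]; positivity
  have hD : 0 < (g + P) ^ 2 + Q ^ 2 := by nlinarith [sq_nonneg Q]
  have habs : ‖μ‖ ^ 2 = ((g - P) ^ 2 + Q ^ 2) / ((g + P) ^ 2 + Q ^ 2) := by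
    rw [hμ, norm_div, div_pow, Complex.sq_norm, Complex.sq_norm]
    congr 1 <;> simp [Complex.normSq_apply] <;> ring
  have hgP : Real.sin αt * Real.sin βt * Real.sin γt /
      (Real.sin α * Real.sin β * Real.sin γ) = g * P := by
    rw [hg, hP]; field_simp
  rw [habs, hgP]
  field_simp
  ring
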